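/- Let G be a nontrivial finite abelian group and let S be a zero-sum free sequence over G with k(S) = k(G). Then the set of subsums of S is exactly the set of nonzero elements of G: Σ(S) = G ∖ {0}. -/
import Mathlib


/-- The cross number `k(S)` of a sequence (finite multiset) `S` over an additive group:
the sum, with multiplicity, of the reciprocals of the orders of its elements. -/
noncomputable def crossNum {G : Type*} [AddCommGroup G] (S : Multiset G) : ℝ :=
  (S.map fun g => ((addOrderOf g : ℝ))⁻¹).sum

/-- `S` is zero-sum free: no nonempty sub-multiset of `S` has sum `0`. -/
def IsZeroSumFree {G : Type*} [AddCommGroup G] (S : Multiset G) : Prop :=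
  ∀ T : Multiset G, T ≤ S → T ≠ 0 → T.sum ≠ 0

/-- The little cross number `k(G)`: the maximal cross number of a zero-sum free
sequence over `G`. -/
noncomputable def littleK (G : Type*) [AddCommGroup G] : ℝ :=
  sSup {x : ℝ | ∃ S : Multiset G, IsZeroSumFree S ∧ crossNum S = x}

/-- The set of subsums of a sequence `S`: sums of nonempty sub-multisets of `S`. -/
def subsums {G : Type*} [AddCommGroup G] (S : Multiset G) : Set G :=
  {x | ∃ T : Multiset G, T ≤ S ∧ T ≠ 0 ∧ T.sum = x}

/-- A zero-sum free sequence over a finite group has length less than `Nat.card G`. -/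
lemma card_lt_of_isZeroSumFree {G : Type*} [AddCommGroup G] [Finite G] (S : Multiset G)
    (hS : IsZeroSumFree S) : Multiset.card S < Nat.card G := by
  set L := S.toList with hL
  have hlen : L.length = Multiset.card S := Multiset.length_toList S
  have key : ∀ i j : ℕ, i < j → j ≤ L.length → (L.take i).sum ≠ (L.take j).sum := by
    intro i j hij hjl heq
    set M := (L.drop i).take (j - i) with hM
    have htj : L.take j = L.take i ++ M := by
      rw [hM, ← List.take_add]
      congr 1; omega
    have hMsum : M.sum = 0 := by
      have h := heq
      rw [htj, List.sum_append] at h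
      have := add_left_cancel (a := (L.take i).sum) (b := 0) (c := M.sum) (by simpa using h.symm)
      exact this.symm
    have hMne : M ≠ [] := by
      have hlenM : M.length = min (j - i) (L.length - i) := by
        rw [hM, List.length_take, List.length_drop]
      intro h
      rw [h] at hlenM
      simp at hlenM
      omega
    have hsub : M.Sublist L := ((L.drop i).take_sublist _).trans (L.drop_sublist i)
    have hle : (↑M : Multiset G) ≤ S := by
      rw [← Multiset.coe_toList S]
      exact hsub.subperm
    exact hS ↑M hle (by simpa using hMne) (by simpa using hMsum)
  have hinj : Function.Injective (fun i : Fin (Multiset.card S + 1) => (L.take i).sum) := by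
    intro i j hij
    by_contra hne
    rcases lt_or_gt_of_ne (fun h : (i : Fin _) = j => hne h) with h | h
    · exact key i j h (by omega) hij
    · exact key j i h (by omega) hij.symm
  have := Nat.card_le_card_of_injective _ hinj
  simpa using this

/-- The cross number of any multiset is at most its cardinality. -/
lemma crossNum_le_card {G : Type*} [AddCommGroup G] [Finite G] (S : Multiset G) :
    crossNum S ≤ Multiset.card S := by
  unfold crossNum
  have h : ∀ x ∈ S.map fun g => ((addOrderOf g : ℝ))⁻¹, x ≤ (1 : ℝ) := by
    intro x hx
    rw [Multiset.mem_map] at hx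
    obtain ⟨g, _, rfl⟩ := hx
    have hpos : 0 < addOrderOf g := addOrderOf_pos g
    have : (1 : ℝ) ≤ (addOrderOf g : ℝ) := by exact_mod_cast hpos
    exact inv_le_one_of_one_le₀ this
  have := Multiset.sum_le_card_nsmul _ _ h
  simpa using this

lemma bddAbove_crossNum (G : Type*) [AddCommGroup G] [Finite G] :
    BddAbove {x : ℝ | ∃ S : Multiset G, IsZeroSumFree S ∧ crossNum S = x} := by
  refine ⟨(Nat.card G : ℝ), fun x hx => ?_⟩
  obtain ⟨S, hS, rfl⟩ := hx
  have h1 := crossNum_le_card S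
  have h2 := card_lt_of_isZeroSumFree S hS
  have : (Multiset.card S : ℝ) ≤ (Nat.card G : ℝ) := by exact_mod_cast h2.le
  linarith

/-- If `G` is a nontrivial finite abelian group and `S` is a zero-sum free sequence
over `G` with `k(S) = k(G)`, then `Σ(S) = G ∖ {0}`. -/
theorem subsums_eq_nonzero_of_maximal_crossNum
    (G : Type*) [AddCommGroup G] [Finite G] [Nontrivial G]
    (S : Multiset G) (hS : IsZeroSumFree S) (hmax : crossNum S = littleK G) :
    subsums S = {x : G | x ≠ 0} := by
  ext x
  simp only [subsums, Set.mem_setOf_eq]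
  constructor
  · rintro ⟨T, hTS, hT0, rfl⟩
    exact hS T hTS hT0
  · intro hx
    by_contra hnot
    haveI : DecidableEq G := Classical.decEq G
    set S' := (-x) ::ₘ S with hS'def
    have hzsf' : IsZeroSumFree S' := by
      intro T hT hT0 hsum
      by_cases hm : (-x) ∈ T
      · have hT' : T.erase (-x) ≤ S := by
          have h := Multiset.erase_le_erase (-x) hT
          simpa [hS'def] using h
        have hsum' : (T.erase (-x)).sum = x := by
          have hTeq : T = (-x) ::ₘ T.erase (-x) := (Multiset.cons_erase hm).symm
          rw [hTeq, Multiset.sum_cons] at hsum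
          have := neg_add_eq_zero.mp hsum
          exact this.symm
        rcases eq_or_ne (T.erase (-x)) 0 with h0 | h0
        · rw [h0] at hsum'
          exact hx (by simpa using hsum'.symm)
        · exact hnot ⟨T.erase (-x), hT', h0, hsum'⟩
      · have hTle : T ≤ S := by
          rw [Multiset.le_iff_count] at hT ⊢
          intro a
          have h := hT a
          rcases eq_or_ne a (-x) with rfl | hne
          · simp [Multiset.count_eq_zero_of_notMem hm]
          · simpa [hS'def, Multiset.count_cons, hne] using h
        exact hS T hTle hT0 hsum
    have hcross : crossNum S' = (addOrderOf (-x) : ℝ)⁻¹ + crossNum S := by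
      simp [crossNum, hS'def]
    have hpos : (0 : ℝ) < (addOrderOf (-x) : ℝ)⁻¹ := by
      have : 0 < addOrderOf (-x) := addOrderOf_pos (-x)
      positivity
    have hle : crossNum S' ≤ littleK G :=
      le_csSup (bddAbove_crossNum G) ⟨S', hzsf', rfl⟩
    rw [hcross, ← hmax] at hle
    linarith
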